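/- arXiv:1404.0818 — 4 statements merged into one kernel-verified Lean document; each statement's English description precedes it below -/
import Mathlib

section
/- Fix a positive integer k and set τ = 6k, ρ = τ + 2(k−1)·C(τ,2), and ζ = ρ + 2k·C(ρ,k+1)². Let H be a finite connected graph that is k-complemented and has treewidth less than k, and let S ⊆ V(H) satisfy: (a) ∅ ≠ S ⊊ V(H); (b) |S| ≤ ρ; (c) S does not induce a clique in H; (d) H ∖ S is connected; (e) S = N_H(V(H) ∖ S). Then there exists a set X ⊆ V(H) such that: (i) X is a proper superset of S; (ii) |X| ≤ ζ; (iii) for every connected component of H ∖ X with vertex set Z, one has |N_H(Z)| ≤ ρ. -/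
/-!
Common definitions: separations, stable separations, the improved graph,
external neighbourhoods, connected components, clique separations, and
rooted tree decompositions together with treewidth.
-/

section Defs

variable {V : Type} [Fintype V] [DecidableEq V]

/-- A separation of a graph `G`: a pair `(A, B)` covering the vertex set with no
edge between `A \ B` and `B \ A`.  Its order is `(A ∩ B).card`. -/
def IsSeparation (G : SimpleGraph V) (A B : Finset V) : Prop :=
  A ∪ B = Finset.univ ∧ ∀ a ∈ A, a ∉ B → ∀ b ∈ B, b ∉ A → ¬G.Adj a b

/-- An `X`–`Y` separation: a separation `(A, B)` with `X ⊆ A` and `Y ⊆ B`. -/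
def IsSepFor (G : SimpleGraph V) (X Y A B : Finset V) : Prop :=
  IsSeparation G A B ∧ X ⊆ A ∧ Y ⊆ B

/-- An `X`–`Y` separation of minimum possible order. -/
def IsMinSepFor (G : SimpleGraph V) (X Y A B : Finset V) : Prop :=
  IsSepFor G X Y A B ∧ ∀ A' B', IsSepFor G X Y A' B' → (A ∩ B).card ≤ (A' ∩ B').card

/-- A separation `(A, B)` is `S`-stable if it is a minimum-order `S_L`–`S_R`
separation for some partition `(S_L, S_R)` of `S`. -/
def IsStable (G : SimpleGraph V) (S A B : Finset V) : Prop :=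
  ∃ SL SR, Disjoint SL SR ∧ SL ∪ SR = S ∧ IsMinSepFor G SL SR A B

/-- `conn_G(x, y) < k`: there is a separation of order `< k` with `x ∈ A ∖ B` and
`y ∈ B ∖ A`.  (For adjacent `x, y` no such separation exists, i.e. `conn = +∞`.) -/
def ConnLt (G : SimpleGraph V) (x y : V) (k : ℕ) : Prop :=
  ∃ A B, IsSeparation G A B ∧ x ∈ A ∧ x ∉ B ∧ y ∈ B ∧ y ∉ A ∧ (A ∩ B).card < k

/-- A graph is `k`-complemented when `conn(x,y) ≥ k` implies that `x` and `y` are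
adjacent; equivalently, any two distinct nonadjacent vertices are separated by a
separation of order `< k`. -/
def KComplemented (G : SimpleGraph V) (k : ℕ) : Prop :=
  ∀ x y, x ≠ y → ¬G.Adj x y → ConnLt G x y k

lemma IsSeparation.symm2 {G : SimpleGraph V} {A B : Finset V} (h : IsSeparation G A B) :
    IsSeparation G B A :=
  ⟨by rw [Finset.union_comm]; exact h.1,
   fun a ha ha' b hb hb' hadj => h.2 b hb hb' a ha ha' hadj.symm⟩

/-- The `k`-improved graph `G^{(k)}`: same vertices, and `xy` is an edge
iff `conn_G(x,y) ≥ k` (in particular all edges of `G` are kept). -/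
def improvedGraph (G : SimpleGraph V) (k : ℕ) : SimpleGraph V where
  Adj x y := x ≠ y ∧ ¬ConnLt G x y k
  symm := ⟨by
    rintro x y ⟨hxy, h⟩
    refine ⟨hxy.symm, ?_⟩
    rintro ⟨A, B, hsep, hy, hy', hx, hx', hc⟩
    exact h ⟨B, A, hsep.symm2, hx, hx', hy, hy', by rwa [Finset.inter_comm]⟩⟩
  loopless := ⟨fun x h => h.1 rfl⟩

/-- The external neighbourhood `N_G(Z)`: vertices outside `Z` with a neighbour in `Z`. -/
def extNbhd (G : SimpleGraph V) (Z : Set V) : Set V :=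
  {v | v ∉ Z ∧ ∃ z ∈ Z, G.Adj v z}

/-- `Z` is the vertex set of a connected component of `G - X`: it is disjoint from `X`,
induces a connected subgraph, and all its neighbours outside itself lie in `X`. -/
def IsCompAway (G : SimpleGraph V) (X Z : Set V) : Prop :=
  Disjoint Z X ∧ (G.induce Z).Connected ∧
    ∀ ⦃v z : V⦄, z ∈ Z → G.Adj v z → v ∉ Z → v ∈ X

/-- The subgraph of `G` induced on `W` admits no clique separation: there is no
separation `(A, B)` of `G[W]` with `A ∖ B ≠ ∅`, `B ∖ A ≠ ∅` and `A ∩ B` a clique. -/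
def CliqueSepFreeOn (G : SimpleGraph V) (W : Finset V) : Prop :=
  ¬∃ A B : Finset V, A ∪ B = W ∧
      (∀ a ∈ A, a ∉ B → ∀ b ∈ B, b ∉ A → ¬G.Adj a b) ∧
      (A \ B).Nonempty ∧ (B \ A).Nonempty ∧ G.IsClique (↑(A ∩ B) : Set V)

/-- A rooted tree decomposition of the subgraph of `G` induced on `W`.
The rooted tree is given by a finite node type with a parent function
(every node reaches the root by iterating `parent`);
for every vertex of `W` the nodes whose bags contain it form a nonempty connected
subtree, and every edge of `G[W]` lies inside some bag. -/
structure RTDOn (V : Type) [Fintype V] [DecidableEq V] (G : SimpleGraph V) (W : Finset V) where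
  ι : Type
  instFintype : Fintype ι
  instDecEq : DecidableEq ι
  root : ι
  parent : ι → ι
  parent_root : parent root = root
  reaches_root : ∀ t, ∃ n, parent^[n] t = root
  bag : ι → Finset V
  bag_subset : ∀ t, bag t ⊆ W
  bags_connected : ∀ v ∈ W,
    ((SimpleGraph.fromRel fun s t => parent s = t).induce {t | v ∈ bag t}).Connected
  edge_in_bag : ∀ u ∈ W, ∀ v ∈ W, G.Adj u v → ∃ t, u ∈ bag t ∧ v ∈ bag t

/-- A rooted tree decomposition of `G`. -/
abbrev RTD (V : Type) [Fintype V] [DecidableEq V] (G : SimpleGraph V) : Type 1 :=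
  RTDOn V G Finset.univ

namespace RTDOn

variable {G : SimpleGraph V} {W : Finset V}

instance (D : RTDOn V G W) : Fintype D.ι := D.instFintype
instance (D : RTDOn V G W) : DecidableEq D.ι := D.instDecEq

/-- The decomposition has width at most `w`, i.e. all bags have size at most `w + 1`. -/
def widthLe (D : RTDOn V G W) (w : ℕ) : Prop := ∀ t, (D.bag t).card ≤ w + 1

/-- The decomposition has adhesion width at most `ℓ`: for every tree edge
`(t, parent t)` the intersection of the two bags has size at most `ℓ`. -/
def adhesionLe (D : RTDOn V G W) (l : ℕ) : Prop :=
  ∀ t, t ≠ D.root → (D.bag t ∩ D.bag (D.parent t)).card ≤ l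

/-- A family of potential bags captures a decomposition if every bag belongs to it. -/
def captures (D : RTDOn V G W) (ℬ : Finset (Finset V)) : Prop := ∀ t, D.bag t ∈ ℬ

/-- `γ(t)`: union of the bags at all descendants of `t`. -/
def gammaSet (D : RTDOn V G W) (t : D.ι) : Set V :=
  {v | ∃ s, (∃ n, D.parent^[n] s = t) ∧ v ∈ D.bag s}

/-- `σ(t)`: the adhesion of `t` with its parent (empty at the root). -/
def sigmaBag (D : RTDOn V G W) (t : D.ι) : Finset V :=
  if t = D.root then ∅ else D.bag t ∩ D.bag (D.parent t)

/-- `α(t) = γ(t) ∖ σ(t)`. -/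
def alphaSet (D : RTDOn V G W) (t : D.ι) : Set V := D.gammaSet t \ ↑(D.sigmaBag t)

end RTDOn

/-- A rooted tree decomposition is connectivity-sensitive when every `G[α(t)]`
is connected and `σ(t) = N_G(α(t))`. -/
def IsCSDecomp {G : SimpleGraph V} (D : RTD V G) : Prop :=
  ∀ t, (G.induce (D.alphaSet t)).Connected ∧ extNbhd G (D.alphaSet t) = ↑(D.sigmaBag t)

/-- The treewidth of `G`: the least `w` such that `G` has a (rooted) tree
decomposition of width at most `w`. -/
noncomputable def treewidth (G : SimpleGraph V) : ℕ :=
  sInf {w : ℕ | ∃ D : RTD V G, D.widthLe w}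

/-- `ℬ^{≤q}`: all sets of size at most `q` contained in some member of `ℬ`. -/
def belowFam (ℬ : Finset (Finset V)) (q : ℕ) : Finset (Finset V) :=
  Finset.univ.filter fun X => X.card ≤ q ∧ ∃ B ∈ ℬ, X ⊆ B

end Defs
section Helpers

lemma reach_invar {α : Type*} {G : SimpleGraph α} (p : α → Prop)
    (hp : ∀ ⦃a b⦄, G.Adj a b → p a → p b) {x y : α} (hr : G.Reachable x y) (hx : p x) : p y := by
  obtain ⟨w⟩ := hr
  induction w with
  | nil => exact hx
  | cons h w ih => exact ih (hp h hx)

lemma walk_cross {α : Type*} {G : SimpleGraph α} (q : α → Prop) {a b : α}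
    (w : G.Walk a b) (ha : q a) (hb : ¬ q b) :
    ∃ u v, G.Adj u v ∧ q u ∧ ¬ q v := by
  induction w with
  | nil => exact absurd ha hb
  | @cons u v _ h w ih =>
    by_cases hv : q v
    · exact ih hv hb
    · exact ⟨u, v, h, ha, hv⟩

lemma choose_lb : ∀ n r : ℕ, r < n → n - r ≤ n.choose (r + 1) := by
  intro n
  induction n with
  | zero => omega
  | succ n ih =>
    intro r hr
    rcases Nat.lt_or_ge r n with h | h
    · have h1 := ih r h
      have h2 : 1 ≤ n.choose r := Nat.choose_pos (le_of_lt h)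
      have : (n+1).choose (r+1) = n.choose r + n.choose (r+1) := Nat.choose_succ_succ n r
      omega
    · have hrn : r = n := by omega
      subst hrn
      simp [Nat.choose_self]

end Helpers
section Tree

open Finset

variable {V : Type} [Fintype V] [DecidableEq V] {G : SimpleGraph V}

/-- `s` is a descendant of `c` (including `c` itself). -/
def Desc (D : RTD V G) (c s : D.ι) : Prop := ∃ n, D.parent^[n] s = c

noncomputable def dep (D : RTD V G) (t : D.ι) : ℕ := Nat.find (D.reaches_root t)

lemma dep_spec (D : RTD V G) (t : D.ι) : D.parent^[dep D t] t = D.root :=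
  Nat.find_spec (D.reaches_root t)

lemma dep_min (D : RTD V G) {t : D.ι} {n : ℕ} (h : D.parent^[n] t = D.root) :
    dep D t ≤ n := Nat.find_min' _ h

lemma parent_iterate_root (D : RTD V G) (n : ℕ) : D.parent^[n] D.root = D.root := by
  induction n with
  | zero => rfl
  | succ n ih => rw [Function.iterate_succ_apply, D.parent_root, ih]

lemma dep_child (D : RTD V G) {c t : D.ι} (hc : D.parent c = t) (hct : c ≠ t) :
    dep D t < dep D c := by
  have hcr : c ≠ D.root := by
    intro h; apply hct; rw [← hc, h, D.parent_root]
  have hpos : 0 < dep D c := by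
    rcases Nat.eq_zero_or_pos (dep D c) with h | h
    · exfalso; apply hcr
      have := dep_spec D c; rwa [h] at this
    · exact h
  have h1 : D.parent^[dep D c - 1] t = D.root := by
    have h2 : D.parent^[(dep D c - 1) + 1] c = D.root := by
      rw [Nat.sub_add_cancel hpos]; exact dep_spec D c
    rw [Function.iterate_succ_apply, hc] at h2
    exact h2
  have := dep_min D h1
  omega

lemma iterate_dep_cases (D : RTD V G) (j : ℕ) (t : D.ι) :
    dep D (D.parent^[j] t) + j ≤ dep D t ∨ D.parent^[j] t = D.root := by
  rcases le_or_gt j (dep D t) with h | h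
  · left
    have : D.parent^[dep D t - j] (D.parent^[j] t) = D.root := by
      rw [← Function.iterate_add_apply, Nat.sub_add_cancel h]
      exact dep_spec D t
    have := dep_min D this
    omega
  · right
    have : D.parent^[j] t = D.parent^[j - dep D t] (D.parent^[dep D t] t) := by
      rw [← Function.iterate_add_apply, Nat.sub_add_cancel (le_of_lt h)]
    rw [this, dep_spec, parent_iterate_root]

lemma desc_disj_aux (D : RTD V G) {c c' t s : D.ι} (hc : D.parent c = t) (hct : c ≠ t)
    (hc' : D.parent c' = t) (hct' : c' ≠ t) (hcc' : c ≠ c')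
    {n n' : ℕ} (hn : D.parent^[n] s = c) (hn' : D.parent^[n'] s = c') (hle : n ≤ n') : False := by
  have hj : D.parent^[n' - n] c = c' := by
    rw [← hn, ← Function.iterate_add_apply, Nat.sub_add_cancel hle, hn']
  have hnn : n ≠ n' := by rintro rfl; rw [hn] at hn'; exact hcc' hn'
  have hjpos : 0 < n' - n := by omega
  have hj2 : D.parent^[n' - n - 1] t = c' := by
    rw [← hc, ← Function.iterate_succ_apply, Nat.succ_eq_add_one, Nat.sub_add_cancel hjpos]
    exact hj
  have hdd : dep D t < dep D c' := dep_child D hc' hct'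
  rcases iterate_dep_cases D (n' - n - 1) t with h | h
  · rw [hj2] at h; omega
  · rw [hj2] at h
    apply hct'
    rw [h, ← hc', h, D.parent_root]

lemma desc_disj (D : RTD V G) {c c' t s : D.ι} (hc : D.parent c = t) (hct : c ≠ t)
    (hc' : D.parent c' = t) (hct' : c' ≠ t) (hcc' : c ≠ c')
    (h1 : Desc D c s) (h2 : Desc D c' s) : False := by
  obtain ⟨n, hn⟩ := h1
  obtain ⟨n', hn'⟩ := h2
  rcases le_or_gt n n' with h | h
  · exact desc_disj_aux D hc hct hc' hct' hcc' hn hn' h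
  · exact desc_disj_aux D hc' hct' hc hct (Ne.symm hcc') hn' hn (le_of_lt h)

lemma bag_cross (D : RTD V G) {v : V} {c t s₁ s₂ : D.ι} (hct : D.parent c = t)
    (h1 : v ∈ D.bag s₁) (hd1 : Desc D c s₁) (h2 : v ∈ D.bag s₂) (hd2 : ¬ Desc D c s₂) :
    v ∈ D.bag t := by
  have hconn := D.bags_connected v (Finset.mem_univ v)
  have hr := hconn.preconnected ⟨s₁, h1⟩ ⟨s₂, h2⟩
  obtain ⟨w⟩ := hr
  obtain ⟨u, x, hadj, hqu, hqx⟩ :=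
    walk_cross (fun (y : {x | v ∈ D.bag x}) => Desc D c (↑y : D.ι)) w hd1 hd2
  rw [SimpleGraph.comap_adj, SimpleGraph.fromRel_adj] at hadj
  simp only [Function.Embedding.coe_subtype] at hadj
  obtain ⟨hne, hcase⟩ := hadj
  rcases hcase with hpu | hpx
  · by_cases huc : (↑u : D.ι) = c
    · have hxt : (↑x : D.ι) = t := by rw [← hpu, huc, hct]
      have hx2 : v ∈ D.bag (↑x : D.ι) := x.2
      rwa [hxt] at hx2
    · exfalso; apply hqx
      obtain ⟨n, hn⟩ := hqu
      have hnpos : 0 < n := by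
        rcases Nat.eq_zero_or_pos n with h | h
        · exfalso; apply huc; rw [← hn, h]; rfl
        · exact h
      refine ⟨n - 1, ?_⟩
      have hstep : D.parent^[(n-1)+1] (↑u : D.ι) = c := by
        rw [Nat.sub_add_cancel hnpos]; exact hn
      rw [Function.iterate_succ_apply, hpu] at hstep
      exact hstep
  · exfalso; apply hqx
    obtain ⟨n, hn⟩ := hqu
    refine ⟨n + 1, ?_⟩
    rw [Function.iterate_succ_apply, hpx]
    exact hn

end Tree
section Bal

open Finset

variable {V : Type} [Fintype V] [DecidableEq V] {H : SimpleGraph V}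

lemma exists_balanced_sep (D : RTD V H) {k : ℕ} (hk : 1 ≤ k)
    (hw : ∀ t, (D.bag t).card ≤ k) (U W : Finset V) (hWU : W ⊆ U)
    (hm : 6*k+2 ≤ W.card) :
    ∃ A B : Finset V, A ∪ B = U ∧
      (∀ a ∈ A, a ∉ B → ∀ b ∈ B, b ∉ A → ¬H.Adj a b) ∧
      (A ∩ B).card ≤ k ∧ k+1 ≤ (W ∩ (A \ B)).card ∧ k+1 ≤ (W ∩ (B \ A)).card := by
  classical
  have hbag : ∀ v : V, ∃ s, v ∈ D.bag s := by
    intro v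
    obtain ⟨⟨s, hs⟩⟩ := (D.bags_connected v (Finset.mem_univ v)).nonempty
    exact ⟨s, hs⟩
  set m := W.card with hmdef
  set g : D.ι → ℕ := fun t => (W.filter (fun v => ∃ s, Desc D t s ∧ v ∈ D.bag s)).card with hg
  have hroot : g D.root = m := by
    rw [hg]
    simp only
    rw [Finset.filter_true_of_mem]
    intro v _
    obtain ⟨s, hs⟩ := hbag v
    exact ⟨s, D.reaches_root s, hs⟩
  have hrootmem : D.root ∈ Finset.univ.filter (fun t => m < 2 * g t) := by
    rw [Finset.mem_filter]
    exact ⟨Finset.mem_univ _, by rw [hroot]; omega⟩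
  obtain ⟨t, htmem, htmax⟩ := Finset.exists_max_image
      (Finset.univ.filter (fun t => m < 2 * g t)) (dep D) ⟨D.root, hrootmem⟩
  have htP : m < 2 * g t := (Finset.mem_filter.1 htmem).2
  set children := Finset.univ.filter (fun c => D.parent c = t ∧ c ≠ t) with hchildren
  have hchild : ∀ c ∈ children, D.parent c = t ∧ c ≠ t := by
    intro c hc; exact (Finset.mem_filter.1 hc).2
  have hchild_small : ∀ c ∈ children, 2 * g c ≤ m := by
    intro c hc
    by_contra hcon
    have hcf : c ∈ Finset.univ.filter (fun t => m < 2 * g t) := by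
      rw [Finset.mem_filter]; exact ⟨Finset.mem_univ _, by omega⟩
    have h1 := htmax c hcf
    have h2 := dep_child D (hchild c hc).1 (hchild c hc).2
    omega
  set Sc : D.ι → Finset V :=
    fun c => (W.filter (fun v => ∃ s, Desc D c s ∧ v ∈ D.bag s)) \ D.bag t with hSc
  have hdisj : ∀ c ∈ children, ∀ c' ∈ children, c ≠ c' → Disjoint (Sc c) (Sc c') := by
    intro c hc c' hc' hne
    rw [Finset.disjoint_left]
    intro v hv hv'
    rw [hSc] at hv hv'
    simp only [Finset.mem_sdiff, Finset.mem_filter] at hv hv'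
    obtain ⟨⟨hvW, s, ds, vb⟩, hvt⟩ := hv
    obtain ⟨⟨_, s', ds', vb'⟩, _⟩ := hv'
    have hnd : ¬ Desc D c s' := by
      intro d
      exact desc_disj D (hchild c hc).1 (hchild c hc).2 (hchild c' hc').1 (hchild c' hc').2
        hne d ds'
    exact hvt (bag_cross D (hchild c hc).1 vb ds vb' hnd)
  have hcover : g t ≤ k + ∑ c ∈ children, (Sc c).card := by
    have hsub : W.filter (fun v => ∃ s, Desc D t s ∧ v ∈ D.bag s) ⊆
        (D.bag t) ∪ children.biUnion Sc := by
      intro v hv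
      rw [Finset.mem_filter] at hv
      obtain ⟨hvW, s, hds, vb⟩ := hv
      by_cases hvt : v ∈ D.bag t
      · exact Finset.mem_union_left _ hvt
      · have hex : ∃ n, D.parent^[n] s = t := hds
        set n₀ := Nat.find hex with hn₀
        have hfind : D.parent^[n₀] s = t := Nat.find_spec hex
        have hpos : 0 < n₀ := by
          rcases Nat.eq_zero_or_pos n₀ with h | h
          · exfalso; apply hvt
            rw [h] at hfind
            simp only [Function.iterate_zero_apply] at hfind
            rwa [hfind] at vb
          · exact h
        set c := D.parent^[n₀ - 1] s with hcdef
        have hpc : D.parent c = t := by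
          have hstep : D.parent^[(n₀ - 1) + 1] s = t := by
            rw [Nat.sub_add_cancel hpos]; exact hfind
          rw [Function.iterate_succ_apply'] at hstep
          exact hstep
        have hct : c ≠ t := by
          intro h
          have := Nat.find_min hex (m := n₀ - 1) (by omega)
          exact this h
        have hcC : c ∈ children := by
          rw [hchildren, Finset.mem_filter]; exact ⟨Finset.mem_univ _, hpc, hct⟩
        refine Finset.mem_union_right _ (Finset.mem_biUnion.2 ⟨c, hcC, ?_⟩)
        rw [hSc]
        simp only [Finset.mem_sdiff, Finset.mem_filter]
        exact ⟨⟨hvW, s, ⟨n₀ - 1, rfl⟩, vb⟩, hvt⟩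
    calc g t ≤ ((D.bag t) ∪ children.biUnion Sc).card := Finset.card_le_card hsub
      _ ≤ (D.bag t).card + (children.biUnion Sc).card := Finset.card_union_le _ _
      _ ≤ k + ∑ c ∈ children, (Sc c).card :=
          Nat.add_le_add (hw t) (Finset.card_biUnion_le)
  -- greedy choice of K
  set 𝒦 := children.powerset.filter (fun K => k+1 ≤ ∑ c ∈ K, (Sc c).card) with h𝒦
  have hchmem : children ∈ 𝒦 := by
    rw [h𝒦, Finset.mem_filter]
    refine ⟨Finset.mem_powerset_self _, ?_⟩
    omega
  obtain ⟨K, hK𝒦, hKmin⟩ := Finset.exists_min_image 𝒦 Finset.card ⟨children, hchmem⟩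
  have hKsub : K ⊆ children := Finset.mem_powerset.1 (Finset.mem_filter.1 hK𝒦).1
  have hKsum : k+1 ≤ ∑ c ∈ K, (Sc c).card := (Finset.mem_filter.1 hK𝒦).2
  have hKne : K.Nonempty := by
    rcases K.eq_empty_or_nonempty with h | h
    · rw [h] at hKsum; simp at hKsum
    · exact h
  obtain ⟨c₀, hc₀⟩ := hKne
  have hKup : 2 * ∑ c ∈ K, (Sc c).card ≤ 2*k + m := by
    have herase : ∑ c ∈ K.erase c₀, (Sc c).card ≤ k := by
      by_contra hcon
      have hmem : K.erase c₀ ∈ 𝒦 := by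
        rw [h𝒦, Finset.mem_filter]
        refine ⟨Finset.mem_powerset.2 ((Finset.erase_subset _ _).trans hKsub), by omega⟩
      have := hKmin _ hmem
      have := Finset.card_erase_lt_of_mem hc₀
      omega
    have hsum : ∑ c ∈ K.erase c₀, (Sc c).card + (Sc c₀).card = ∑ c ∈ K, (Sc c).card :=
      Finset.sum_erase_add _ _ hc₀
    have hc₀small : 2 * (Sc c₀).card ≤ m := by
      have h1 : (Sc c₀).card ≤ g c₀ := Finset.card_le_card (Finset.sdiff_subset.trans (by rfl))
      have h2 := hchild_small c₀ (hKsub hc₀)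
      omega
    omega
  -- define the separation
  set inK : D.ι → Prop := fun s => ∃ c ∈ K, Desc D c s with hinK
  set A := (D.bag t ∩ U) ∪ U.filter (fun v => ∃ s, inK s ∧ v ∈ D.bag s) with hA
  set B := (D.bag t ∩ U) ∪ U.filter (fun v => ∃ s, ¬ inK s ∧ v ∈ D.bag s) with hB
  have hAU : A ⊆ U := Finset.union_subset Finset.inter_subset_right (Finset.filter_subset _ _)
  have hBU : B ⊆ U := Finset.union_subset Finset.inter_subset_right (Finset.filter_subset _ _)
  have hABU : A ∪ B = U := by
    apply Finset.Subset.antisymm (Finset.union_subset hAU hBU)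
    intro v hv
    obtain ⟨s, hs⟩ := hbag v
    by_cases h : inK s
    · exact Finset.mem_union_left _ (Finset.mem_union_right _
        (Finset.mem_filter.2 ⟨hv, s, h, hs⟩))
    · exact Finset.mem_union_right _ (Finset.mem_union_right _
        (Finset.mem_filter.2 ⟨hv, s, h, hs⟩))
  have hABt : A ∩ B ⊆ D.bag t := by
    intro v hv
    rw [Finset.mem_inter] at hv
    obtain ⟨hvA, hvB⟩ := hv
    rcases Finset.mem_union.1 hvA with h1 | h1
    · exact (Finset.mem_inter.1 h1).1
    rcases Finset.mem_union.1 hvB with h2 | h2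
    · exact (Finset.mem_inter.1 h2).1
    obtain ⟨_, s₁, ⟨c, hcK, hdesc⟩, vb₁⟩ := Finset.mem_filter.1 h1
    obtain ⟨_, s₂, hnk, vb₂⟩ := Finset.mem_filter.1 h2
    have hnd : ¬ Desc D c s₂ := fun d => hnk ⟨c, hcK, d⟩
    exact bag_cross D (hchild c (hKsub hcK)).1 vb₁ hdesc vb₂ hnd
  have hCk : (A ∩ B).card ≤ k := le_trans (Finset.card_le_card hABt) (hw t)
  have hedge : ∀ a ∈ A, a ∉ B → ∀ b ∈ B, b ∉ A → ¬H.Adj a b := by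
    intro a haA haB b hbB hbA hadj
    obtain ⟨s, has, hbs⟩ := D.edge_in_bag a (Finset.mem_univ a) b (Finset.mem_univ b) hadj
    by_cases h : inK s
    · exact hbA (Finset.mem_union_right _ (Finset.mem_filter.2 ⟨hBU hbB, s, h, hbs⟩))
    · exact haB (Finset.mem_union_right _ (Finset.mem_filter.2 ⟨hAU haA, s, h, has⟩))
  have hScA : ∀ c ∈ K, Sc c ⊆ W ∩ (A \ B) := by
    intro c hcK v hv
    rw [hSc] at hv
    simp only [Finset.mem_sdiff, Finset.mem_filter] at hv
    obtain ⟨⟨hvW, s, ds, vb⟩, hvt⟩ := hv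
    have hvU : v ∈ U := hWU hvW
    have hvA : v ∈ A :=
      Finset.mem_union_right _ (Finset.mem_filter.2 ⟨hvU, s, ⟨c, hcK, ds⟩, vb⟩)
    have hvB : v ∉ B := by
      intro hB'
      rcases Finset.mem_union.1 hB' with h2 | h2
      · exact hvt (Finset.mem_inter.1 h2).1
      · obtain ⟨_, s₂, hnk, vb₂⟩ := Finset.mem_filter.1 h2
        have hnd : ¬ Desc D c s₂ := fun d => hnk ⟨c, hcK, d⟩
        exact hvt (bag_cross D (hchild c (hKsub hcK)).1 vb ds vb₂ hnd)
    exact Finset.mem_inter.2 ⟨hvW, Finset.mem_sdiff.2 ⟨hvA, hvB⟩⟩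
  have hsideA : k + 1 ≤ (W ∩ (A \ B)).card := by
    have hsub : K.biUnion Sc ⊆ W ∩ (A \ B) := by
      intro v hv
      obtain ⟨c, hcK, hvc⟩ := Finset.mem_biUnion.1 hv
      exact hScA c hcK hvc
    have hcard : (K.biUnion Sc).card = ∑ c ∈ K, (Sc c).card :=
      Finset.card_biUnion (fun c hc c' hc' hne => hdisj c (hKsub hc) c' (hKsub hc') hne)
    calc k + 1 ≤ ∑ c ∈ K, (Sc c).card := hKsum
      _ = (K.biUnion Sc).card := hcard.symm
      _ ≤ (W ∩ (A \ B)).card := Finset.card_le_card hsub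
  have hWA : (W ∩ A).card ≤ k + ∑ c ∈ K, (Sc c).card := by
    have hsub : W ∩ A ⊆ D.bag t ∪ K.biUnion Sc := by
      intro v hv
      rw [Finset.mem_inter] at hv
      obtain ⟨hvW, hvA⟩ := hv
      by_cases hvt : v ∈ D.bag t
      · exact Finset.mem_union_left _ hvt
      rcases Finset.mem_union.1 hvA with h1 | h1
      · exact absurd (Finset.mem_inter.1 h1).1 hvt
      obtain ⟨_, s, ⟨c, hcK, ds⟩, vb⟩ := Finset.mem_filter.1 h1
      refine Finset.mem_union_right _ (Finset.mem_biUnion.2 ⟨c, hcK, ?_⟩)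
      rw [hSc]
      simp only [Finset.mem_sdiff, Finset.mem_filter]
      exact ⟨⟨hvW, s, ds, vb⟩, hvt⟩
    calc (W ∩ A).card ≤ (D.bag t ∪ K.biUnion Sc).card := Finset.card_le_card hsub
      _ ≤ (D.bag t).card + (K.biUnion Sc).card := Finset.card_union_le _ _
      _ ≤ k + ∑ c ∈ K, (Sc c).card := Nat.add_le_add (hw t) (Finset.card_biUnion_le)
  have hsideB : k + 1 ≤ (W ∩ (B \ A)).card := by
    have hsub : W \ A ⊆ W ∩ (B \ A) := by
      intro v hv
      rw [Finset.mem_sdiff] at hv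
      obtain ⟨hvW, hvA⟩ := hv
      have hvB : v ∈ B := by
        have : v ∈ A ∪ B := by rw [hABU]; exact hWU hvW
        rcases Finset.mem_union.1 this with h | h
        · exact absurd h hvA
        · exact h
      exact Finset.mem_inter.2 ⟨hvW, Finset.mem_sdiff.2 ⟨hvB, hvA⟩⟩
    have h1 : (W \ A).card + (W ∩ A).card = m := Finset.card_sdiff_add_card_inter W A
    have h2 := Finset.card_le_card hsub
    omega
  exact ⟨A, B, hABU, hedge, hCk, hsideA, hsideB⟩

end Bal
section Comp

open Finset

variable {V : Type} [Fintype V] [DecidableEq V] {H : SimpleGraph V}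

/-- The trivial one-node rooted tree decomposition. -/
def trivRTD (H : SimpleGraph V) : RTD V H where
  ι := Unit
  instFintype := inferInstance
  instDecEq := inferInstance
  root := ()
  parent := id
  parent_root := rfl
  reaches_root := fun _ => ⟨0, rfl⟩
  bag := fun _ => Finset.univ
  bag_subset := fun _ => Finset.Subset.refl _
  bags_connected := by
    intro v _
    haveI : Nonempty ({t : Unit | v ∈ (Finset.univ : Finset V)} : Set Unit) :=
      ⟨⟨(), Finset.mem_univ v⟩⟩
    exact ⟨fun a b => by cases Subsingleton.elim a b; exact SimpleGraph.Reachable.refl a⟩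
  edge_in_bag := fun u _ v _ _ => ⟨(), Finset.mem_univ u, Finset.mem_univ v⟩

lemma exists_small_width {k : ℕ} (htw : treewidth H < k) :
    ∃ D : RTD V H, ∀ t, (D.bag t).card ≤ k := by
  have hne : {w : ℕ | ∃ D : RTD V H, D.widthLe w}.Nonempty :=
    ⟨Fintype.card V, trivRTD H, fun t => by
      simp only [trivRTD, Finset.card_univ]; omega⟩
  have hmem := Nat.sInf_mem hne
  obtain ⟨D, hD⟩ := hmem
  refine ⟨D, fun t => le_trans (hD t) ?_⟩
  have : treewidth H < k := htw
  rw [treewidth] at this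
  omega

lemma comp_side_aux {Z : Set V} (hconn : (H.induce Z).Connected)
    {A B : Finset V} (hcov : ∀ z ∈ Z, z ∈ A ∪ B)
    (hedge : ∀ a ∈ A, a ∉ B → ∀ b ∈ B, b ∉ A → ¬H.Adj a b)
    (hdisj : ∀ z ∈ Z, z ∉ A ∩ B) {z₀ : V} (hz₀ : z₀ ∈ Z)
    (h0A : z₀ ∈ A) (h0B : z₀ ∉ B) :
    ∀ z ∈ Z, z ∈ A ∧ z ∉ B := by
  intro z hz
  have hreach := hconn.preconnected ⟨z₀, hz₀⟩ ⟨z, hz⟩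
  refine reach_invar (fun (x : ↥Z) => (↑x : V) ∈ A ∧ (↑x : V) ∉ B) ?_ hreach ⟨h0A, h0B⟩
  rintro a b hab ⟨haA, haB⟩
  rw [SimpleGraph.comap_adj] at hab
  have hbU := hcov ↑b b.2
  by_cases hbA : (↑b : V) ∈ A
  · refine ⟨hbA, fun hbB => ?_⟩
    exact hdisj ↑b b.2 (Finset.mem_inter.2 ⟨hbA, hbB⟩)
  · exfalso
    have hbB : (↑b : V) ∈ B := by
      rcases Finset.mem_union.1 hbU with h | h
      · exact absurd h hbA
      · exact h
    exact hedge ↑a haA haB ↑b hbB hbA hab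

lemma comp_side {Z : Set V} (hconn : (H.induce Z).Connected)
    {A B : Finset V} (hcov : ∀ z ∈ Z, z ∈ A ∪ B)
    (hedge : ∀ a ∈ A, a ∉ B → ∀ b ∈ B, b ∉ A → ¬H.Adj a b)
    (hdisj : ∀ z ∈ Z, z ∉ A ∩ B) :
    (∀ z ∈ Z, z ∈ A ∧ z ∉ B) ∨ (∀ z ∈ Z, z ∈ B ∧ z ∉ A) := by
  obtain ⟨⟨z₀, hz₀⟩⟩ := hconn.nonempty
  have hedge' : ∀ a ∈ B, a ∉ A → ∀ b ∈ A, b ∉ B → ¬H.Adj a b :=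
    fun a ha ha' b hb hb' hadj => hedge b hb hb' a ha ha' hadj.symm
  have hcov' : ∀ z ∈ Z, z ∈ B ∪ A := by
    intro z hz; rw [Finset.union_comm]; exact hcov z hz
  have hdisj' : ∀ z ∈ Z, z ∉ B ∩ A := by
    intro z hz; rw [Finset.inter_comm]; exact hdisj z hz
  by_cases h0A : z₀ ∈ A
  · by_cases h0B : z₀ ∈ B
    · exact absurd (Finset.mem_inter.2 ⟨h0A, h0B⟩) (hdisj z₀ hz₀)
    · exact Or.inl (comp_side_aux hconn hcov hedge hdisj hz₀ h0A h0B)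
  · have h0B : z₀ ∈ B := by
      rcases Finset.mem_union.1 (hcov z₀ hz₀) with h | h
      · exact absurd h h0A
      · exact h
    exact Or.inr (comp_side_aux hconn hcov' hedge' hdisj' hz₀ h0B h0A)

lemma extNbhd_subset_of_comp {X Z : Set V} (h : IsCompAway H X Z) : extNbhd H Z ⊆ X := by
  rintro v ⟨hvZ, z, hz, hadj⟩
  exact h.2.2 hz hadj hvZ

lemma comp_subset {X Z₁ Z₂ : Set V} (h1conn : (H.induce Z₁).Connected)
    (h1disj : Disjoint Z₁ X) (h2 : IsCompAway H X Z₂) {v : V}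
    (hv₁ : v ∈ Z₁) (hv₂ : v ∈ Z₂) : Z₁ ⊆ Z₂ := by
  intro z hz
  have hreach := h1conn.preconnected ⟨v, hv₁⟩ ⟨z, hz⟩
  exact reach_invar (fun (x : ↥Z₁) => (↑x : V) ∈ Z₂)
    (by
      rintro a b hab haZ₂
      rw [SimpleGraph.comap_adj] at hab
      by_contra hbZ₂
      have := h2.2.2 haZ₂ hab.symm hbZ₂
      exact (Set.disjoint_left.1 h1disj b.2) this)
    hreach hv₂

lemma comp_meets_sep {Z : Set V} {X₀ A B : Finset V}
    (hconn : (H.induce Z).Connected)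
    (hN : extNbhd H Z = (↑X₀ : Set V))
    (hcov : ∀ z ∈ Z, z ∈ A ∪ B)
    (hedge : ∀ a ∈ A, a ∉ B → ∀ b ∈ B, b ∉ A → ¬H.Adj a b)
    (hA : (X₀ ∩ (A \ B)).Nonempty) (hB : (X₀ ∩ (B \ A)).Nonempty)
    (hdisj : ∀ z ∈ Z, z ∉ A ∩ B) : False := by
  rcases comp_side hconn hcov hedge hdisj with hside | hside
  · obtain ⟨q, hq⟩ := hB
    rw [Finset.mem_inter, Finset.mem_sdiff] at hq
    have hqN : q ∈ extNbhd H Z := by rw [hN]; exact hq.1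
    obtain ⟨hqZ, z, hz, hadj⟩ := hqN
    exact hedge z (hside z hz).1 (hside z hz).2 q hq.2.1 hq.2.2 hadj.symm
  · obtain ⟨q, hq⟩ := hA
    rw [Finset.mem_inter, Finset.mem_sdiff] at hq
    have hqN : q ∈ extNbhd H Z := by rw [hN]; exact hq.1
    obtain ⟨hqZ, z, hz, hadj⟩ := hqN
    exact hedge q hq.2.1 hq.2.2 z (hside z hz).1 (hside z hz).2 hadj

lemma final_count {ρ k : ℕ} {Z' Z : Set V} {X₀ A B : Finset V}
    (hX₀card : X₀.card = ρ + 1)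
    (hCk : (A ∩ B).card ≤ k)
    (hBside : k + 1 ≤ (X₀ ∩ (B \ A)).card)
    (hNsub : extNbhd H Z' ⊆ (↑X₀ : Set V) ∪ (Z ∩ (↑(A ∩ B) : Set V)))
    (hZX₀ : ∀ v ∈ Z, v ∉ X₀)
    (hside : ∀ z ∈ Z', z ∈ A ∧ z ∉ B)
    (hedge : ∀ a ∈ A, a ∉ B → ∀ b ∈ B, b ∉ A → ¬H.Adj a b) :
    (extNbhd H Z').ncard ≤ ρ := by
  have hsub : extNbhd H Z' ⊆ (↑((X₀ \ (B \ A)) ∪ ((A ∩ B) \ X₀)) : Set V) := by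
    intro v' hv'
    have hv'' := hNsub hv'
    obtain ⟨hv'Z, z, hz, hadj⟩ := hv'
    have hvBA : v' ∉ B \ A := by
      rw [Finset.mem_sdiff]
      rintro ⟨h1, h2⟩
      exact hedge z (hside z hz).1 (hside z hz).2 v' h1 h2 hadj.symm
    rw [Finset.coe_union]
    rcases hv'' with h | h
    · left
      rw [Finset.mem_coe, Finset.mem_sdiff]
      exact ⟨h, hvBA⟩
    · right
      rw [Finset.mem_coe, Finset.mem_sdiff]
      exact ⟨h.2, hZX₀ v' h.1⟩
  have hcard : ((X₀ \ (B \ A)) ∪ ((A ∩ B) \ X₀)).card ≤ ρ := by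
    have h1 : (X₀ \ (B \ A)).card + (X₀ ∩ (B \ A)).card = X₀.card :=
      Finset.card_sdiff_add_card_inter X₀ (B \ A)
    have h2 : ((A ∩ B) \ X₀).card ≤ (A ∩ B).card := Finset.card_le_card Finset.sdiff_subset
    have h3 := Finset.card_union_le (X₀ \ (B \ A)) ((A ∩ B) \ X₀)
    omega
  calc (extNbhd H Z').ncard
      ≤ (↑((X₀ \ (B \ A)) ∪ ((A ∩ B) \ X₀)) : Set V).ncard :=
        Set.ncard_le_ncard hsub (Set.toFinite _)
    _ = ((X₀ \ (B \ A)) ∪ ((A ∩ B) \ X₀)).card := Set.ncard_coe_finset _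
    _ ≤ ρ := hcard

end Comp

/-- Given a connected `k`-complemented graph `H` of treewidth `< k` and a
set `S` satisfying (a)–(e), there is a set `X ⊋ S` with `|X| ≤ ζ` such that every
connected component `Z` of `H − X` has `|N_H(Z)| ≤ ρ`. -/
theorem stmt5 {V : Type} [Fintype V] [DecidableEq V]
    (k τ ρ ζ : ℕ) (hk : 0 < k) (hτ : τ = 6 * k)
    (hρ : ρ = τ + 2 * (k - 1) * τ.choose 2)
    (hζ : ζ = ρ + 2 * k * (ρ.choose (k + 1)) ^ 2)
    (H : SimpleGraph V) (hconn : H.Connected) (hcomp : KComplemented H k)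
    (htw : treewidth H < k) (S : Finset V)
    (ha1 : S.Nonempty) (ha2 : S ≠ Finset.univ)
    (hb : S.card ≤ ρ)
    (hc : ¬H.IsClique (↑S : Set V))
    (hd : (H.induce ((↑S : Set V)ᶜ)).Connected)
    (he : (↑S : Set V) = extNbhd H ((↑S : Set V)ᶜ)) :
    ∃ X : Finset V, S ⊂ X ∧ X.card ≤ ζ ∧
      ∀ Z : Set V, IsCompAway H (↑X) Z → (extNbhd H Z).ncard ≤ ρ := by
  classical
  subst hτ
  rcases Nat.lt_or_ge k 2 with hk1 | hk2
  -- ===== case k = 1 : contradiction =====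
  · exfalso
    have hk1' : k = 1 := by omega
    rw [SimpleGraph.isClique_iff, Set.Pairwise] at hc
    push_neg at hc
    obtain ⟨x, hx, y, hy, hxy, hnadj⟩ := hc
    obtain ⟨A, B, hsep, hxA, hxB, hyB, hyA, hord⟩ := hcomp x y hxy hnadj
    rw [hk1'] at hord
    have hAB : A ∩ B = ∅ := Finset.card_eq_zero.1 (by omega)
    have hreach := hconn.preconnected x y
    have hyfin : y ∈ A ∧ y ∉ B := by
      refine reach_invar (fun v => v ∈ A ∧ v ∉ B) ?_ hreach ⟨hxA, hxB⟩
      rintro a b hadj ⟨haA, haB⟩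
      have hbU : b ∈ A ∪ B := by rw [hsep.1]; exact Finset.mem_univ b
      by_cases hbA : b ∈ A
      · refine ⟨hbA, fun hbB => ?_⟩
        have : b ∈ A ∩ B := Finset.mem_inter.2 ⟨hbA, hbB⟩
        rw [hAB] at this
        exact absurd this (Finset.notMem_empty b)
      · exfalso
        have hbB : b ∈ B := by
          rcases Finset.mem_union.1 hbU with h | h
          · exact absurd h hbA
          · exact h
        exact hsep.2 a haA haB b hbB hbA hadj
    exact hyA hyfin.1
  -- ===== case k ≥ 2 =====
  -- numeric facts
  have hρ6 : 6 * k + 2 ≤ ρ := by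
    have hC2 : 1 ≤ (6 * k).choose 2 := Nat.choose_pos (by omega)
    have h1 : 2 * 1 * 1 ≤ 2 * (k - 1) * (6 * k).choose 2 :=
      Nat.mul_le_mul (Nat.mul_le_mul_left 2 (by omega)) hC2
    omega
  have hζbound : (ρ + 1) + k * k ≤ ζ := by
    rw [hζ]
    have hkρ : k < ρ := by omega
    have hC : k ≤ ρ.choose (k + 1) := le_trans (by omega) (choose_lb ρ k hkρ)
    nlinarith [hC, hk2]
  -- the vertex v₀ and the set X₀
  obtain ⟨v₀, hv₀⟩ : ∃ v, v ∉ S := by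
    by_contra h
    push_neg at h
    exact ha2 (Finset.eq_univ_iff_forall.2 h)
  set X₀ := insert v₀ S with hX₀def
  have hSX₀ : S ⊆ X₀ := Finset.subset_insert _ _
  have hX₀card : X₀.card = S.card + 1 := Finset.card_insert_of_notMem hv₀
  obtain ⟨D, hD⟩ := exists_small_width htw
  -- the family of bad components
  set 𝒮 : Set (Set V) :=
    {Z : Set V | IsCompAway H (↑X₀ : Set V) Z ∧ ρ < (extNbhd H Z).ncard} with h𝒮def
  have hfin𝒮 : 𝒮.Finite := Set.toFinite _
  have hbadN : ∀ Z ∈ 𝒮, extNbhd H Z = (↑X₀ : Set V) ∧ X₀.card = ρ + 1 := by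
    intro Z hZ
    obtain ⟨hZc, hZn⟩ := hZ
    have hsub : extNbhd H Z ⊆ (↑X₀ : Set V) := extNbhd_subset_of_comp hZc
    have h1 : (extNbhd H Z).ncard ≤ X₀.card := by
      calc (extNbhd H Z).ncard ≤ (↑X₀ : Set V).ncard :=
            Set.ncard_le_ncard hsub (Set.toFinite _)
        _ = X₀.card := Set.ncard_coe_finset _
    have hX₀ρ : X₀.card = ρ + 1 := by omega
    have heq : extNbhd H Z = (↑X₀ : Set V) := by
      apply Set.eq_of_subset_of_ncard_le hsub ?_ (Set.toFinite _)
      rw [Set.ncard_coe_finset]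
      omega
    exact ⟨heq, hX₀ρ⟩
  -- local balanced separations for each bad component
  have hsepAll : ∀ Z : Set V, ∃ AB : Finset V × Finset V, Z ∈ 𝒮 →
      (AB.1 ∪ AB.2 = (Set.toFinite Z).toFinset ∪ X₀ ∧
       (∀ a ∈ AB.1, a ∉ AB.2 → ∀ b ∈ AB.2, b ∉ AB.1 → ¬H.Adj a b) ∧
       (AB.1 ∩ AB.2).card ≤ k ∧
       k + 1 ≤ (X₀ ∩ (AB.1 \ AB.2)).card ∧ k + 1 ≤ (X₀ ∩ (AB.2 \ AB.1)).card) := by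
    intro Z
    by_cases hZ : Z ∈ 𝒮
    · obtain ⟨A, B, h1, h2, h3, h4, h5⟩ :=
        exists_balanced_sep D (by omega) hD ((Set.toFinite Z).toFinset ∪ X₀) X₀
          Finset.subset_union_right (by rw [(hbadN Z hZ).2]; omega)
      exact ⟨(A, B), fun _ => ⟨h1, h2, h3, h4, h5⟩⟩
    · exact ⟨(∅, ∅), fun h => absurd h hZ⟩
  choose F hF using hsepAll
  set T := hfin𝒮.toFinset with hTdef
  have hTmem : ∀ Z : Set V, Z ∈ T ↔ Z ∈ 𝒮 := fun Z => Set.Finite.mem_toFinset _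
  set X := X₀ ∪ T.biUnion (fun Z => (F Z).1 ∩ (F Z).2) with hXdef
  have hX₀X : X₀ ⊆ X := Finset.subset_union_left
  -- every bad component meets its own separator; also used for counting
  have hCsubU : ∀ Z ∈ 𝒮, (F Z).1 ∩ (F Z).2 ⊆ (Set.toFinite Z).toFinset ∪ X₀ := by
    intro Z hZ
    rw [← (hF Z hZ).1]
    exact Finset.inter_subset_left.trans Finset.subset_union_left
  -- counting the bad components
  have hcount : T.card ≤ k := by
    rcases T.eq_empty_or_nonempty with hT | hT
    · rw [hT]; simp
    · obtain ⟨Z₁, hZ₁T⟩ := hT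
      have hZ₁ : Z₁ ∈ 𝒮 := (hTmem Z₁).1 hZ₁T
      obtain ⟨Ag, Bg, hABg, hedgeg, hCkg, hAg, hBg⟩ :=
        exists_balanced_sep D (by omega) hD Finset.univ X₀ (Finset.subset_univ _)
          (by rw [(hbadN Z₁ hZ₁).2]; omega)
      have hmeet : ∀ Z : Set V, ∃ q : V, Z ∈ 𝒮 → q ∈ Z ∧ q ∈ Ag ∩ Bg := by
        intro Z
        by_cases hZ : Z ∈ 𝒮
        · by_contra hcon
          push_neg at hcon
          apply comp_meets_sep hZ.1.2.1 (hbadN Z hZ).1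
            (fun z _ => by rw [hABg]; exact Finset.mem_univ z) hedgeg
            (Finset.card_pos.1 (by omega)) (Finset.card_pos.1 (by omega))
          intro z hz hzC
          exact (hcon z).2 hz hzC
        · exact ⟨v₀, fun h => absurd h hZ⟩
      choose f hf using hmeet
      have hinj : Set.InjOn f ↑T := by
        intro Z hZT Z' hZ'T hff
        have hZ : Z ∈ 𝒮 := (hTmem Z).1 hZT
        have hZ' : Z' ∈ 𝒮 := (hTmem Z').1 hZ'T
        have h1 := (hf Z hZ).1
        have h2 := (hf Z' hZ').1
        rw [hff] at h1
        exact Set.Subset.antisymm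
          (comp_subset hZ.1.2.1 hZ.1.1 hZ'.1 ((hff ▸ (hf Z hZ).1)) h2)
          (comp_subset hZ'.1.2.1 hZ'.1.1 hZ.1 h2 (hff ▸ (hf Z hZ).1))
      have hmap : ∀ Z ∈ T, f Z ∈ Ag ∩ Bg := fun Z hZT => (hf Z ((hTmem Z).1 hZT)).2
      calc T.card ≤ (Ag ∩ Bg).card := Finset.card_le_card_of_injOn f hmap hinj
        _ ≤ k := hCkg
  -- the size bound
  have hXcard : X.card ≤ ζ := by
    have h1 : X.card ≤ X₀.card + (T.biUnion (fun Z => (F Z).1 ∩ (F Z).2)).card :=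
      Finset.card_union_le _ _
    have h2 : (T.biUnion (fun Z => (F Z).1 ∩ (F Z).2)).card ≤
        ∑ Z ∈ T, ((F Z).1 ∩ (F Z).2).card := Finset.card_biUnion_le
    have h3 : ∑ Z ∈ T, ((F Z).1 ∩ (F Z).2).card ≤ T.card * k := by
      calc ∑ Z ∈ T, ((F Z).1 ∩ (F Z).2).card ≤ T.card • k :=
            Finset.sum_le_card_nsmul _ _ _
              (fun Z hZT => (hF Z ((hTmem Z).1 hZT)).2.2.1)
        _ = T.card * k := by rw [smul_eq_mul]
    have h4 : T.card * k ≤ k * k := Nat.mul_le_mul_right _ hcount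
    omega
  -- the strict inclusion
  have hSX : S ⊂ X := by
    rw [Finset.ssubset_iff_subset_ne]
    constructor
    · exact hSX₀.trans hX₀X
    · intro h
      apply hv₀
      rw [h]
      exact hX₀X (Finset.mem_insert_self v₀ S)
  refine ⟨X, hSX, hXcard, ?_⟩
  -- ===== the component property =====
  intro Z' hZ'
  have hZ'disjX : Disjoint Z' (↑X : Set V) := hZ'.1
  have hZ'disjX₀ : Disjoint Z' (↑X₀ : Set V) :=
    Set.disjoint_of_subset_right (Finset.coe_subset.2 hX₀X) hZ'disjX
  by_cases hcl : ∀ ⦃v z : V⦄, z ∈ Z' → H.Adj v z → v ∉ Z' → v ∈ (↑X₀ : Set V)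
  · -- Z' is itself an X₀-component
    by_contra hρlt
    push_neg at hρlt
    have hZ𝒮 : Z' ∈ 𝒮 := ⟨⟨hZ'disjX₀, hZ'.2.1, hcl⟩, hρlt⟩
    obtain ⟨hABZ, hedgeZ, hCkZ, hsAZ, hsBZ⟩ := hF Z' hZ𝒮
    apply comp_meets_sep hZ'.2.1 (hbadN Z' hZ𝒮).1 ?_ hedgeZ
      (Finset.card_pos.1 (by omega)) (Finset.card_pos.1 (by omega)) ?_
    · intro z hz
      rw [hABZ]
      exact Finset.mem_union_left _ ((Set.Finite.mem_toFinset _).2 hz)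
    · intro z hz hzC
      apply Set.disjoint_left.1 hZ'disjX hz
      rw [hXdef, Finset.coe_union]
      right
      rw [Finset.mem_coe]
      exact Finset.mem_biUnion.2 ⟨Z', (hTmem Z').2 hZ𝒮, hzC⟩
  · -- Z' lies inside some bad component Z
    push_neg at hcl
    obtain ⟨v, z, hz, hadj, hvZ', hvX₀⟩ := hcl
    have hvX : v ∈ (↑X : Set V) := hZ'.2.2 hz hadj hvZ'
    have hvbi : v ∈ T.biUnion (fun Z => (F Z).1 ∩ (F Z).2) := by
      rw [hXdef, Finset.coe_union] at hvX
      rcases hvX with h | h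
      · exact absurd h hvX₀
      · exact Finset.mem_coe.1 h
    obtain ⟨Z, hZT, hvC⟩ := Finset.mem_biUnion.1 hvbi
    have hZ𝒮 : Z ∈ 𝒮 := (hTmem Z).1 hZT
    obtain ⟨hABZ, hedgeZ, hCkZ, hsAZ, hsBZ⟩ := hF Z hZ𝒮
    have hZdisjX₀ : ∀ u ∈ Z, u ∉ X₀ := by
      intro u hu
      exact fun huX₀ => Set.disjoint_left.1 hZ𝒮.1.1 hu (Finset.mem_coe.2 huX₀)
    have hvZ : v ∈ Z := by
      have hvU : v ∈ (Set.toFinite Z).toFinset ∪ X₀ := hCsubU Z hZ𝒮 hvC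
      rcases Finset.mem_union.1 hvU with h | h
      · exact (Set.Finite.mem_toFinset _).1 h
      · exact absurd (Finset.mem_coe.2 h) hvX₀
    have hzZ : z ∈ Z := by
      by_contra hzZ
      have hzX₀ := hZ𝒮.1.2.2 hvZ hadj.symm hzZ
      exact Set.disjoint_left.1 hZ'disjX₀ hz hzX₀
    have hZ'Z : Z' ⊆ Z := comp_subset hZ'.2.1 hZ'disjX₀ hZ𝒮.1 hz hzZ
    -- the neighbourhood of Z' is inside X₀ ∪ (Z ∩ C_Z)
    have hNsub : extNbhd H Z' ⊆ (↑X₀ : Set V) ∪ (Z ∩ (↑((F Z).1 ∩ (F Z).2) : Set V)) := by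
      rintro v' ⟨hv'Z', z₁, hz₁, hadj₁⟩
      by_cases hv'Z : v' ∈ Z
      · right
        refine ⟨hv'Z, ?_⟩
        have hv'X : v' ∈ (↑X : Set V) := hZ'.2.2 hz₁ hadj₁ hv'Z'
        have hv'X₀ : v' ∉ X₀ := hZdisjX₀ v' hv'Z
        have hv'bi : v' ∈ T.biUnion (fun Z => (F Z).1 ∩ (F Z).2) := by
          rw [hXdef, Finset.coe_union] at hv'X
          rcases hv'X with h | h
          · exact absurd (Finset.mem_coe.1 h) hv'X₀
          · exact Finset.mem_coe.1 h
        obtain ⟨Z'', hZ''T, hv'C''⟩ := Finset.mem_biUnion.1 hv'bi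
        have hZ''𝒮 : Z'' ∈ 𝒮 := (hTmem Z'').1 hZ''T
        have hv'Z'' : v' ∈ Z'' := by
          have hv'U : v' ∈ (Set.toFinite Z'').toFinset ∪ X₀ := hCsubU Z'' hZ''𝒮 hv'C''
          rcases Finset.mem_union.1 hv'U with h | h
          · exact (Set.Finite.mem_toFinset _).1 h
          · exact absurd h hv'X₀
        have hZZ'' : Z = Z'' :=
          Set.Subset.antisymm
            (comp_subset hZ𝒮.1.2.1 hZ𝒮.1.1 hZ''𝒮.1 hv'Z hv'Z'')
            (comp_subset hZ''𝒮.1.2.1 hZ''𝒮.1.1 hZ𝒮.1 hv'Z'' hv'Z)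
        rw [hZZ'']
        exact Finset.mem_coe.2 hv'C''
      · left
        have : v' ∈ extNbhd H Z := ⟨hv'Z, z₁, hZ'Z hz₁, hadj₁⟩
        rw [(hbadN Z hZ𝒮).1] at this
        exact this
    -- Z' lies on one side of the separation
    have hcov' : ∀ y ∈ Z', y ∈ (F Z).1 ∪ (F Z).2 := by
      intro y hy
      rw [hABZ]
      exact Finset.mem_union_left _ ((Set.Finite.mem_toFinset _).2 (hZ'Z hy))
    have hdisj' : ∀ y ∈ Z', y ∉ (F Z).1 ∩ (F Z).2 := by
      intro y hy hyC
      apply Set.disjoint_left.1 hZ'disjX hy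
      rw [hXdef, Finset.coe_union]
      right
      exact Finset.mem_coe.2 (Finset.mem_biUnion.2 ⟨Z, hZT, hyC⟩)
    rcases comp_side hZ'.2.1 hcov' hedgeZ hdisj' with hside | hside
    · exact final_count (hbadN Z hZ𝒮).2 hCkZ hsBZ hNsub hZdisjX₀ hside hedgeZ
    · have hedgeZ' : ∀ a ∈ (F Z).2, a ∉ (F Z).1 → ∀ b ∈ (F Z).1, b ∉ (F Z).2 → ¬H.Adj a b :=
        fun a ha ha' b hb hb' hadj' => hedgeZ b hb hb' a ha ha' hadj'.symm
      have hCk' : ((F Z).2 ∩ (F Z).1).card ≤ k := by rw [Finset.inter_comm]; exact hCkZ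
      have hNsub' : extNbhd H Z' ⊆
          (↑X₀ : Set V) ∪ (Z ∩ (↑((F Z).2 ∩ (F Z).1) : Set V)) := by
        rw [Finset.inter_comm]
        exact hNsub
      exact final_count (hbadN Z hZ𝒮).2 hCk' hsAZ hNsub' hZdisjX₀ hside hedgeZ'
end

section
/- For every finite graph G and positive integer k, the k-improved graph G^{(k)} is k-complemented; consequently, G^{(k)} is the unique minimal k-complemented supergraph of G on the vertex set V(G). -/
/-- The `k`-improved graph `G^{(k)}` is `k`-complemented; consequently it
is the unique minimal `k`-complemented supergraph of `G` on the vertex set `V(G)`: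
it is a `k`-complemented supergraph of `G` and is contained in every `k`-complemented
supergraph of `G`. -/
theorem stmt7 {V : Type} [Fintype V] [DecidableEq V] (G : SimpleGraph V)
    (k : ℕ) (hk : 0 < k) :
    KComplemented (improvedGraph G k) k ∧ G ≤ improvedGraph G k ∧
      ∀ H : SimpleGraph V, KComplemented H k → G ≤ H → improvedGraph G k ≤ H := by
  refine ⟨?_, ?_, ?_⟩
  · intro x y hxy hadj
    have hconn : ConnLt G x y k := by
      by_contra h
      exact hadj ⟨hxy, h⟩
    obtain ⟨A, B, hsep, hxA, hxB, hyB, hyA, hcard⟩ := hconn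
    refine ⟨A, B, ⟨hsep.1, ?_⟩, hxA, hxB, hyB, hyA, hcard⟩
    intro a ha ha' b hb hb' habj
    exact habj.2 ⟨A, B, hsep, ha, ha', hb, hb', hcard⟩
  · intro x y hxy
    refine ⟨G.ne_of_adj hxy, ?_⟩
    rintro ⟨A, B, hsep, hxA, hxB, hyB, hyA, _⟩
    exact hsep.2 x hxA hxB y hyB hyA hxy
  · intro H hH hGH x y hxy
    by_contra hnot
    obtain ⟨A, B, hsep, hxA, hxB, hyB, hyA, hcard⟩ := hH x y hxy.1 hnot
    exact hxy.2 ⟨A, B, ⟨hsep.1, fun a ha ha' b hb hb' habj =>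
      hsep.2 a ha ha' b hb hb' (hGH habj)⟩, hxA, hxB, hyB, hyA, hcard⟩
end

section
/- Let k be a positive integer and G a finite graph. Every rooted tree decomposition (T,β) of G of width less than k is also a tree decomposition of the k-improved graph G^{(k)}. -/
namespace Stmt9Aux

/-- `t` is an ancestor of `s` (i.e. `s` is in the subtree rooted at `t`). -/
def Desc {ι : Type} (p : ι → ι) (t s : ι) : Prop := ∃ n, p^[n] s = t

lemma iter_root {ι : Type} {p : ι → ι} {r : ι} (hr : p r = r) (n : ℕ) : p^[n] r = r := by
  induction n with
  | zero => rfl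
  | succ n ih => rw [Function.iterate_succ_apply, hr, ih]

lemma cycle_eq_root {ι : Type} {p : ι → ι} {r : ι} (hr : p r = r)
    (hreach : ∀ t, ∃ n, p^[n] t = r) {t : ι} {n : ℕ} (hn : 0 < n) (h : p^[n] t = t) :
    t = r := by
  obtain ⟨m, hm⟩ := hreach t
  have hiter : ∀ j, p^[j * n] t = t := by
    intro j; induction j with
    | zero => simp
    | succ j ih => rw [Nat.succ_mul, Function.iterate_add_apply, h, ih]
  have hmn : m ≤ m * n := Nat.le_mul_of_pos_right m hn
  have h2 : p^[m * n] t = r := by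
    have he : m * n = (m * n - m) + m := by omega
    rw [he, Function.iterate_add_apply, hm, iter_root hr]
  rw [hiter m] at h2; exact h2

lemma desc_antisymm {ι : Type} {p : ι → ι} {r : ι} (hr : p r = r)
    (hreach : ∀ t, ∃ n, p^[n] t = r) {t s : ι}
    (hst : Desc p t s) (hts : Desc p s t) : t = s := by
  obtain ⟨n, hn⟩ := hst; obtain ⟨m, hm⟩ := hts
  rcases Nat.eq_zero_or_pos n with h0 | hpos
  · subst h0; exact hn.symm
  · have hcyc : p^[m + n] s = s := by
      rw [Function.iterate_add_apply, hn, hm]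
    have hs : s = r := cycle_eq_root hr hreach (by omega) hcyc
    have ht : t = r := by rw [← hn, hs, iter_root hr]
    rw [hs, ht]

lemma desc_parent {ι : Type} {p : ι → ι} {t s : ι}
    (h : Desc p t s) (hne : s ≠ t) : Desc p t (p s) := by
  obtain ⟨n, hn⟩ := h
  rcases Nat.eq_zero_or_pos n with h0 | hpos
  · subst h0; exact absurd hn hne
  · exact ⟨n - 1, by
      rw [← Function.iterate_succ_apply, Nat.succ_eq_add_one, show n - 1 + 1 = n from by omega]; exact hn⟩

lemma parent_not_desc {ι : Type} {p : ι → ι} {r : ι} (hr : p r = r)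
    (hreach : ∀ t, ∃ n, p^[n] t = r) {t : ι} (ht : t ≠ r) : ¬ Desc p t (p t) := by
  rintro ⟨n, hn⟩
  exact ht (cycle_eq_root hr hreach (n := n + 1) (by omega)
    (by rw [Function.iterate_succ_apply]; exact hn))

lemma crossing {ι : Type} {p : ι → ι} {a b t : ι}
    (hadj : (SimpleGraph.fromRel fun s t => p s = t).Adj a b)
    (ha : Desc p t a) (hb : ¬ Desc p t b) : a = t ∧ b = p t := by
  obtain ⟨hne, h | h⟩ := hadj
  · by_cases hat : a = t
    · exact ⟨hat, by rw [← hat, ← h]⟩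
    · exact absurd (h ▸ desc_parent ha hat) hb
  · obtain ⟨n, hn⟩ := ha
    exact absurd ⟨n + 1, by rw [Function.iterate_succ_apply, h]; exact hn⟩ hb

end Stmt9Aux

lemma connLt_symm' {V : Type} [Fintype V] [DecidableEq V] {G : SimpleGraph V} {x y : V} {k : ℕ}
    (h : ConnLt G x y k) : ConnLt G y x k := by
  obtain ⟨A, B, hsep, h1, h2, h3, h4, hc⟩ := h
  exact ⟨B, A, hsep.symm2, h3, h4, h1, h2, by rwa [Finset.inter_comm]⟩

open Stmt9Aux

/-- A rooted tree decomposition of `G` of width `< k` (all bags of size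
at most `k`) is also a tree decomposition of `G^{(k)}`: since all the conditions other
than the edge condition do not refer to the graph, it suffices that every edge of
`G^{(k)}` lies inside some bag. -/
theorem stmt9 {V : Type} [Fintype V] [DecidableEq V] (k : ℕ) (hk : 0 < k)
    (G : SimpleGraph V) (D : RTD V G) (hw : ∀ t, (D.bag t).card ≤ k) :
    ∀ u v, (improvedGraph G k).Adj u v → ∃ t, u ∈ D.bag t ∧ v ∈ D.bag t := by
  classical
  intro u v huv
  obtain ⟨hne, hconn⟩ := huv
  by_contra hno
  push_neg at hno
  apply hconn
  set p := D.parent with hp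
  have hr : p D.root = D.root := D.parent_root
  have hreach : ∀ t, ∃ n, p^[n] t = D.root := D.reaches_root
  have hbag : ∀ x : V, ∃ s, x ∈ D.bag s := by
    intro x
    obtain ⟨⟨s, hs⟩⟩ := (D.bags_connected x (Finset.mem_univ x)).nonempty
    exact ⟨s, hs⟩
  have trace : ∀ (x : V) (t s₁ s₂ : D.ι), x ∈ D.bag s₁ → x ∈ D.bag s₂ →
      Desc p t s₁ → ¬ Desc p t s₂ → x ∈ D.bag t ∧ x ∈ D.bag (p t) := by
    intro x t s₁ s₂ h1 h2 hd1 hd2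
    obtain ⟨w⟩ := (D.bags_connected x (Finset.mem_univ x)).preconnected ⟨s₁, h1⟩ ⟨s₂, h2⟩
    obtain ⟨d, _, hfst, hsnd⟩ :=
      w.exists_boundary_dart {a : {t' : D.ι | x ∈ D.bag t'} | Desc p t a.1} hd1 hd2
    have hadj : (SimpleGraph.fromRel fun s t => p s = t).Adj d.fst.1 d.snd.1 := d.adj
    obtain ⟨he1, he2⟩ := crossing hadj hfst hsnd
    exact ⟨he1 ▸ d.fst.2, he2 ▸ d.snd.2⟩
  have home : ∀ x : V, ∃ h : D.ι, x ∈ D.bag h ∧ ∀ s, x ∈ D.bag s → Desc p h s := by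
    intro x
    obtain ⟨s₀, hs₀⟩ := hbag x
    obtain ⟨h, hh, hmin⟩ := Finset.exists_min_image
      (Finset.univ.filter fun t => x ∈ D.bag t) (fun t => Nat.find (hreach t))
      ⟨s₀, by simp [hs₀]⟩
    have hhx : x ∈ D.bag h := (Finset.mem_filter.mp hh).2
    refine ⟨h, hhx, fun s hs => ?_⟩
    by_contra hnd
    obtain ⟨hbt, hbpt⟩ := trace x h h s hhx hs ⟨0, rfl⟩ hnd
    by_cases hroot : h = D.root
    · exact hnd (hroot ▸ hreach s)
    · have hpos : 0 < Nat.find (hreach h) := (Nat.find_pos (hreach h)).mpr hroot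
      have hspec : p^[Nat.find (hreach h)] h = D.root := Nat.find_spec (hreach h)
      have hle : Nat.find (hreach (p h)) ≤ Nat.find (hreach h) - 1 := by
        apply Nat.find_le
        rw [← Function.iterate_succ_apply, Nat.succ_eq_add_one,
          show Nat.find (hreach h) - 1 + 1 = Nat.find (hreach h) from by omega]
        exact hspec
      have hmem : p h ∈ Finset.univ.filter fun t => x ∈ D.bag t := by simp [hbpt]
      have := hmin (p h) hmem
      have h5 : Nat.find (hreach h) ≤ Nat.find (hreach (p h)) := this
      omega
  have main : ∀ (x y : V) (t : D.ι), x ∈ D.bag t →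
      (∀ s, x ∈ D.bag s → Desc p t s) → (∀ s, y ∈ D.bag s → ¬ Desc p t s) →
      ConnLt G x y k := by
    intro x y t hxt hx hy
    have hroot : t ≠ D.root := by
      intro h; obtain ⟨s, hs⟩ := hbag y
      exact hy s hs (h ▸ hreach s)
    set A : Finset V := Finset.univ.filter (fun w => ∃ s, Desc p t s ∧ w ∈ D.bag s) with hA
    set B : Finset V := Finset.univ.filter (fun w => ∃ s, ¬ Desc p t s ∧ w ∈ D.bag s) with hB
    have hmemA : ∀ w, w ∈ A ↔ ∃ s, Desc p t s ∧ w ∈ D.bag s := by intro w; simp [hA]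
    have hmemB : ∀ w, w ∈ B ↔ ∃ s, ¬ Desc p t s ∧ w ∈ D.bag s := by intro w; simp [hB]
    have hxA : x ∈ A := (hmemA x).mpr ⟨t, ⟨0, rfl⟩, hxt⟩
    have hxB : x ∉ B := by
      intro h; obtain ⟨s, hns, hxs⟩ := (hmemB x).mp h; exact hns (hx s hxs)
    have hyB : y ∈ B := by
      obtain ⟨s, hs⟩ := hbag y; exact (hmemB y).mpr ⟨s, hy s hs, hs⟩
    have hyA : y ∉ A := by
      intro h; obtain ⟨s, hds, hys⟩ := (hmemA y).mp h; exact hy s hys hds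
    have hsep : IsSeparation G A B := by
      constructor
      · apply Finset.eq_univ_of_forall
        intro w
        rw [Finset.mem_union]
        obtain ⟨s, hs⟩ := hbag w
        by_cases hd : Desc p t s
        · exact Or.inl ((hmemA w).mpr ⟨s, hd, hs⟩)
        · exact Or.inr ((hmemB w).mpr ⟨s, hd, hs⟩)
      · intro a haA haB b hbB hbA hadj
        obtain ⟨s, hs1, hs2⟩ := D.edge_in_bag a (Finset.mem_univ a) b (Finset.mem_univ b) hadj
        by_cases hd : Desc p t s
        · exact hbA ((hmemA b).mpr ⟨s, hd, hs2⟩)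
        · exact haB ((hmemB a).mpr ⟨s, hd, hs1⟩)
    have hsub : A ∩ B ⊆ D.bag t \ {x} := by
      intro w hw
      rw [Finset.mem_inter] at hw
      obtain ⟨s₁, hd1, hw1⟩ := (hmemA w).mp hw.1
      obtain ⟨s₂, hd2, hw2⟩ := (hmemB w).mp hw.2
      obtain ⟨hwt, hwpt⟩ := trace w t s₁ s₂ hw1 hw2 hd1 hd2
      rw [Finset.mem_sdiff, Finset.mem_singleton]
      refine ⟨hwt, fun hwx => ?_⟩
      subst hwx
      exact parent_not_desc hr hreach hroot (hx (p t) hwpt)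
    have hcard : (A ∩ B).card < k := by
      have h1 : (A ∩ B).card ≤ (D.bag t \ {x}).card := Finset.card_le_card hsub
      have h2 : (D.bag t \ {x}).card = (D.bag t).card - 1 := by
        rw [Finset.card_sdiff_of_subset (Finset.singleton_subset_iff.mpr hxt), Finset.card_singleton]
      have h3 : 0 < (D.bag t).card := Finset.card_pos.mpr ⟨x, hxt⟩
      have h4 := hw t
      omega
    exact ⟨A, B, hsep, hxA, hxB, hyB, hyA, hcard⟩
  obtain ⟨tu, hu, hhu⟩ := home u
  obtain ⟨tv, hv, hhv⟩ := home v
  by_cases hcase : Desc p tu tv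
  · have hnd : ¬ Desc p tv tu := by
      intro h
      have heq : tu = tv := desc_antisymm hr hreach hcase h
      exact hno tu hu (by rw [heq]; exact hv)
    have hkey : ∀ s, u ∈ D.bag s → ¬ Desc p tv s := by
      intro s hs hds
      have := trace u tv s tu hs hu hds hnd
      exact hno tv this.1 hv
    exact connLt_symm' (main v u tv hv hhv hkey)
  · have hkey : ∀ s, v ∈ D.bag s → ¬ Desc p tu s := by
      intro s hs hds
      have := trace v tu s tv hs hv hds hcase
      exact hno tu hu this.1
    exact main u v tu hu hhu hkey
end

section
/- Let G be a finite graph, S ⊆ V(G), and let L, R ⊆ S be disjoint subsets. If (A,B) is an L–R separation of minimum order among all L–R separations, then there exists a partition (S_L, S_R) of S with L ⊆ S_L ⊆ A and R ⊆ S_R ⊆ B such that (A,B) is an S_L–S_R separation of minimum order among all S_L–S_R separations; in particular, (A,B) is S-stable. -/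
/-- If `(A,B)` is a minimum-order `L`–`R` separation for disjoint
`L, R ⊆ S`, then there is a partition `(S_L, S_R)` of `S` with `L ⊆ S_L ⊆ A` and
`R ⊆ S_R ⊆ B` such that `(A,B)` is a minimum-order `S_L`–`S_R` separation;
in particular `(A,B)` is `S`-stable. -/
theorem stmt12 {V : Type} [Fintype V] [DecidableEq V] (G : SimpleGraph V)
    (S L R A B : Finset V) (hL : L ⊆ S) (hR : R ⊆ S) (hLR : Disjoint L R)
    (h : IsMinSepFor G L R A B) :
    (∃ SL SR : Finset V, SL ∪ SR = S ∧ Disjoint SL SR ∧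
      L ⊆ SL ∧ SL ⊆ A ∧ R ⊆ SR ∧ SR ⊆ B ∧ IsMinSepFor G SL SR A B) ∧
    IsStable G S A B := by
  obtain ⟨⟨hsep, hLA, hRB⟩, hmin⟩ := h
  set SL : Finset V := (S ∩ A) \ R with hSL
  set SR : Finset V := S \ SL with hSR
  have hSLsub : SL ⊆ S := fun v hv => (Finset.mem_inter.mp (Finset.mem_sdiff.mp hv).1).1
  have hunion : SL ∪ SR = S := Finset.union_sdiff_of_subset hSLsub
  have hdisj : Disjoint SL SR := Finset.disjoint_sdiff
  have hLSL : L ⊆ SL := by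
    intro v hv
    exact Finset.mem_sdiff.mpr ⟨Finset.mem_inter.mpr ⟨hL hv, hLA hv⟩,
      Finset.disjoint_left.mp hLR hv⟩
  have hSLA : SL ⊆ A := fun v hv => (Finset.mem_inter.mp (Finset.mem_sdiff.mp hv).1).2
  have hRSR : R ⊆ SR := by
    intro v hv
    exact Finset.mem_sdiff.mpr ⟨hR hv, fun hc => (Finset.mem_sdiff.mp hc).2 hv⟩
  have hSRB : SR ⊆ B := by
    intro v hv
    obtain ⟨hvS, hvSL⟩ := Finset.mem_sdiff.mp hv
    by_cases hvA : v ∈ A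
    · by_cases hvR : v ∈ R
      · exact hRB hvR
      · exact absurd (Finset.mem_sdiff.mpr ⟨Finset.mem_inter.mpr ⟨hvS, hvA⟩, hvR⟩) hvSL
    · have : v ∈ A ∪ B := hsep.1 ▸ Finset.mem_univ v
      exact (Finset.mem_union.mp this).resolve_left hvA
  have hminSep : IsMinSepFor G SL SR A B := by
    refine ⟨⟨hsep, hSLA, hSRB⟩, fun A' B' hsep' => ?_⟩
    exact hmin A' B' ⟨hsep'.1, fun v hv => hsep'.2.1 (hLSL hv),
      fun v hv => hsep'.2.2 (hRSR hv)⟩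
  exact ⟨⟨SL, SR, hunion, hdisj, hLSL, hSLA, hRSR, hSRB, hminSep⟩,
    SL, SR, hdisj, hunion, hminSep⟩
end
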